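/- Let T = J A^{-1/2} as above and set K_R = {ξ ∈ H : Tξ = ξ}. Then K_R coincides with the image of the J-fixed real subspace H_R = {ξ : Jξ = ξ} under the map ξ ↦ (2/(A^{-1}+1))^{1/2} ξ. -/

import Mathlib

set_option maxHeartbeats 2000000
set_option synthInstance.maxHeartbeats 1000000

/-- With `T = J A^{-1/2} = J ∘ R` and `K_ℝ = {ξ : Tξ = ξ}`, the set `K_ℝ`
coincides with the image of the `J`-fixed real subspace `H_ℝ = {ξ : Jξ = ξ}` under the map
`ξ ↦ S ξ`, where `S = (2/(A⁻¹+1))^{1/2}`. -/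
theorem stmt_3
    {H : Type*} [NormedAddCommGroup H] [InnerProductSpace ℂ H] [CompleteSpace H]
    (A Ainv R S : H →L[ℂ] H) (J : H → H)
    (hA : IsSelfAdjoint A)
    (hApos : ∀ x : H, 0 ≤ (inner ℂ (A x) x : ℂ).re)
    (hAinv : A * Ainv = 1) (hAinv' : Ainv * A = 1)
    (hJadd : ∀ x y : H, J (x + y) = J x + J y)
    (hJsmul : ∀ (c : ℂ) (x : H), J (c • x) = (starRingEnd ℂ) c • J x)
    (hJiso : ∀ x : H, ‖J x‖ = ‖x‖)
    (hJinv : ∀ x : H, J (J x) = x)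
    (hJAJ : ∀ x : H, J (A (J x)) = Ainv x)
    (hR : IsSelfAdjoint R)
    (hRpos : ∀ x : H, 0 ≤ (inner ℂ (R x) x : ℂ).re)
    (hR2 : R ^ 2 * A = 1) (hR2' : A * R ^ 2 = 1)
    (hS : IsSelfAdjoint S)
    (hSpos : ∀ x : H, 0 ≤ (inner ℂ (S x) x : ℂ).re)
    (hS2 : S ^ 2 * (Ainv + 1) = (2 : ℂ) • 1)
    (hS2' : (Ainv + 1) * S ^ 2 = (2 : ℂ) • 1)
    (hSR : S * R = R * S) (hSA : S * A = A * S) :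
    {ξ : H | J (R ξ) = ξ} = (fun ξ : H => S ξ) '' {ξ : H | J ξ = ξ} := by
  -- basic facts about J
  have hJsub : ∀ x y : H, J (x - y) = J x - J y := by
    intro x y
    have h := hJadd (x - y) y
    rw [sub_add_cancel] at h
    exact eq_sub_iff_add_eq.mpr h.symm
  -- J is "anti-unitary" on inner products
  have hJinner : ∀ x y : H, (inner ℂ (J x) (J y) : ℂ) = inner ℂ y x := by
    intro x y
    have e1 : ‖J x + J y‖ = ‖y + x‖ := by rw [← hJadd, hJiso, add_comm]
    have e2 : ‖J x - J y‖ = ‖y - x‖ := by rw [← hJsub, hJiso, norm_sub_rev]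
    have e3 : ‖J x - Complex.I • J y‖ = ‖y - Complex.I • x‖ := by
      have h1 : J (x + Complex.I • y) = J x - Complex.I • J y := by
        rw [hJadd, hJsmul, Complex.conj_I, neg_smul, ← sub_eq_add_neg]
      have h2 : x + Complex.I • y = Complex.I • (y - Complex.I • x) := by
        rw [smul_sub, smul_smul, Complex.I_mul_I, neg_one_smul, sub_neg_eq_add, add_comm]
      rw [← h1, hJiso, h2, norm_smul, Complex.norm_I, one_mul]
    have e4 : ‖J x + Complex.I • J y‖ = ‖y + Complex.I • x‖ := by
      have h1 : J (x - Complex.I • y) = J x + Complex.I • J y := by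
        rw [hJsub, hJsmul, Complex.conj_I, neg_smul, sub_neg_eq_add]
      have h2 : x - Complex.I • y = (-Complex.I) • (y + Complex.I • x) := by
        rw [smul_add, smul_smul, neg_mul, Complex.I_mul_I, neg_neg, one_smul, neg_smul,
          neg_add_eq_sub]
      rw [← h1, hJiso, h2, norm_smul, norm_neg, Complex.norm_I, one_mul]
    rw [inner_eq_sum_norm_sq_div_four, inner_eq_sum_norm_sq_div_four]
    simp only [RCLike.I_to_complex]
    rw [e1, e2, e3, e4]
  have hJinner' : ∀ x y : H, (inner ℂ (J x) y : ℂ) = inner ℂ (J y) x := by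
    intro x y
    have h := hJinner x (J y)
    rwa [hJinv] at h
  -- the conjugated operator Sc = J ∘ S ∘ J
  let Sc : H →L[ℂ] H := LinearMap.mkContinuous
    { toFun := fun x => J (S (J x))
      map_add' := fun x y => by
        show J (S (J (x + y))) = J (S (J x)) + J (S (J y))
        rw [hJadd, map_add, hJadd]
      map_smul' := fun c x => by
        show J (S (J (c • x))) = c • J (S (J x))
        rw [hJsmul, map_smul, hJsmul, Complex.conj_conj] }
    ‖S‖ (fun x => by
      calc ‖J (S (J x))‖ = ‖S (J x)‖ := hJiso _
        _ ≤ ‖S‖ * ‖J x‖ := S.le_opNorm _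
        _ = ‖S‖ * ‖x‖ := by rw [hJiso])
  have hSc_apply : ∀ x : H, Sc x = J (S (J x)) := fun _ => rfl
  have hS_symm := ContinuousLinearMap.isSelfAdjoint_iff_isSymmetric.mp hS
  have hSc_sa : IsSelfAdjoint Sc := by
    rw [ContinuousLinearMap.isSelfAdjoint_iff_isSymmetric]
    intro x y
    show (inner ℂ (Sc x) y : ℂ) = inner ℂ x (Sc y)
    rw [hSc_apply, hSc_apply]
    calc (inner ℂ (J (S (J x))) y : ℂ) = inner ℂ (J y) (S (J x)) := hJinner' _ _
      _ = inner ℂ (S (J y)) (J x) := (hS_symm (J y) (J x)).symm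
      _ = inner ℂ (J (J (S (J y)))) (J x) := by rw [hJinv]
      _ = inner ℂ x (J (S (J y))) := hJinner _ x
  have hSc_pos : (0 : H →L[ℂ] H) ≤ Sc := by
    rw [ContinuousLinearMap.nonneg_iff_isPositive]
    refine ⟨ContinuousLinearMap.isSelfAdjoint_iff_isSymmetric.mp hSc_sa, fun x => ?_⟩
    have h1 : (inner ℂ (Sc x) x : ℂ) = inner ℂ (J x) (S (J x)) := by
      rw [hSc_apply]; exact hJinner' _ _
    simp only [ContinuousLinearMap.reApplyInnerSelf, RCLike.re_to_complex]
    rw [h1, ← inner_conj_symm]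
    rw [Complex.conj_re]
    exact hSpos (J x)
  have hS_pos : (0 : H →L[ℂ] H) ≤ S := by
    rw [ContinuousLinearMap.nonneg_iff_isPositive]
    exact ⟨ContinuousLinearMap.isSelfAdjoint_iff_isSymmetric.mp hS, fun x => by
      simp only [ContinuousLinearMap.reApplyInnerSelf, RCLike.re_to_complex]
      exact hSpos x⟩
  have hR_pos : (0 : H →L[ℂ] H) ≤ R := by
    rw [ContinuousLinearMap.nonneg_iff_isPositive]
    exact ⟨ContinuousLinearMap.isSelfAdjoint_iff_isSymmetric.mp hR, fun x => by
      simp only [ContinuousLinearMap.reApplyInnerSelf, RCLike.re_to_complex]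
      exact hRpos x⟩
  -- algebraic facts
  have hR2eq : R ^ 2 = Ainv := by
    calc R ^ 2 = R ^ 2 * (A * Ainv) := by rw [hAinv, mul_one]
      _ = (R ^ 2 * A) * Ainv := by rw [mul_assoc]
      _ = Ainv := by rw [hR2, one_mul]
  have hAR : A * R = R * A := by
    have h3 : R * R ^ 2 = R ^ 2 * R := by
      rw [pow_two, ← mul_assoc]
    calc A * R = (A * R) * (R ^ 2 * A) := by rw [hR2, mul_one]
      _ = ((A * R) * R ^ 2) * A := by rw [← mul_assoc]
      _ = (A * (R * R ^ 2)) * A := by rw [mul_assoc A R (R ^ 2)]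
      _ = (A * (R ^ 2 * R)) * A := by rw [h3]
      _ = ((A * R ^ 2) * R) * A := by rw [← mul_assoc A (R ^ 2) R]
      _ = R * A := by rw [hR2', one_mul]
  have hSAinv : S * Ainv = Ainv * S := by
    rw [← hR2eq, pow_two, ← mul_assoc, hSR, mul_assoc, hSR, ← mul_assoc]
  -- pointwise J-A facts
  have hJA : ∀ x : H, J (A x) = Ainv (J x) := fun x => by
    have h := hJAJ (J x); rwa [hJinv] at h
  have hJAinv : ∀ x : H, J (Ainv x) = A (J x) := fun x => by
    have h := congrArg J (hJAJ x)
    rw [hJinv] at h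
    exact h.symm
  -- pointwise S² facts
  have hS2m : (S * S) * (Ainv + 1) = (2 : ℂ) • 1 := by rw [← pow_two]; exact hS2
  have hS2m' : (Ainv + 1) * (S * S) = (2 : ℂ) • 1 := by rw [← pow_two]; exact hS2'
  have hS2p : ∀ w : H, S (S (Ainv w + w)) = (2 : ℂ) • w := by
    intro w
    have h := congrArg (fun T : H →L[ℂ] H => T w) hS2m
    simpa only [ContinuousLinearMap.mul_apply, ContinuousLinearMap.add_apply,
      ContinuousLinearMap.one_apply, ContinuousLinearMap.smul_apply] using h
  have hS2p' : ∀ w : H, Ainv (S (S w)) + S (S w) = (2 : ℂ) • w := by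
    intro w
    have h := congrArg (fun T : H →L[ℂ] H => T w) hS2m'
    simpa only [ContinuousLinearMap.mul_apply, ContinuousLinearMap.add_apply,
      ContinuousLinearMap.one_apply, ContinuousLinearMap.smul_apply] using h
  -- injectivity of A + 1
  have hCinv : ((1/2 : ℂ) • (S ^ 2 * Ainv)) * (A + 1) = 1 := by
    have hcomm : S ^ 2 * Ainv = Ainv * S ^ 2 := by
      have l : S ^ 2 * (Ainv + 1) = S ^ 2 * Ainv + S ^ 2 := by rw [mul_add, mul_one]
      have r : (Ainv + 1) * S ^ 2 = Ainv * S ^ 2 + S ^ 2 := by rw [add_mul, one_mul]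
      have : S ^ 2 * Ainv + S ^ 2 = Ainv * S ^ 2 + S ^ 2 := by
        rw [← l, ← r, hS2, hS2']
      exact add_right_cancel this
    have h1 : (S ^ 2 * Ainv) * (A + 1) = (2 : ℂ) • 1 := by
      calc (S ^ 2 * Ainv) * (A + 1) = (S ^ 2 * Ainv) * A + (S ^ 2 * Ainv) * 1 := by
            rw [mul_add]
        _ = S ^ 2 * (Ainv * A) + S ^ 2 * Ainv := by rw [mul_assoc, mul_one]
        _ = S ^ 2 * Ainv + S ^ 2 * (Ainv * A) := by rw [add_comm]
        _ = S ^ 2 * (Ainv + 1) := by rw [hAinv', mul_one, mul_add, mul_one]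
        _ = (2 : ℂ) • 1 := hS2
    calc ((1/2 : ℂ) • (S ^ 2 * Ainv)) * (A + 1)
        = (1/2 : ℂ) • ((S ^ 2 * Ainv) * (A + 1)) := smul_mul_assoc _ _ _
      _ = (1/2 : ℂ) • ((2 : ℂ) • (1 : H →L[ℂ] H)) := by rw [h1]
      _ = 1 := by rw [smul_smul]; norm_num
  have hinj : ∀ u v : H, A u + u = A v + v → u = v := by
    intro u v huv
    have key1 : ∀ w : H, ((1/2 : ℂ) • (S ^ 2 * Ainv) : H →L[ℂ] H) ((A + 1) w) = w := by
      intro w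
      have h := congrArg (fun T : H →L[ℂ] H => T w) hCinv
      simpa only [ContinuousLinearMap.mul_apply, ContinuousLinearMap.one_apply] using h
    have h1 : (A + 1) u = (A + 1) v := by
      simpa only [ContinuousLinearMap.add_apply, ContinuousLinearMap.one_apply] using huv
    calc u = ((1/2 : ℂ) • (S ^ 2 * Ainv) : H →L[ℂ] H) ((A + 1) u) := (key1 u).symm
      _ = ((1/2 : ℂ) • (S ^ 2 * Ainv) : H →L[ℂ] H) ((A + 1) v) := by rw [h1]
      _ = v := key1 v
  -- Sc ∘ Sc = Ainv ∘ S²  (pointwise)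
  have hScSc : ∀ x : H, Sc (Sc x) = Ainv (S (S x)) := by
    intro x
    apply hinj
    have hu : Sc (Sc x) = J (S (S (J x))) := by
      rw [hSc_apply, hSc_apply, hJinv]
    have hconj2 : (starRingEnd ℂ) (2 : ℂ) = 2 := map_ofNat _ 2
    have left : A (Sc (Sc x)) + Sc (Sc x) = (2 : ℂ) • x := by
      rw [hu]
      calc A (J (S (S (J x)))) + J (S (S (J x)))
          = J (Ainv (S (S (J x)))) + J (S (S (J x))) := by rw [hJAinv]
        _ = J (Ainv (S (S (J x))) + S (S (J x))) := (hJadd _ _).symm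
        _ = J ((2 : ℂ) • (J x)) := by rw [hS2p' (J x)]
        _ = (2 : ℂ) • x := by rw [hJsmul, hconj2, hJinv]
    have right : A (Ainv (S (S x))) + Ainv (S (S x)) = (2 : ℂ) • x := by
      have hAAinv : ∀ w : H, A (Ainv w) = w := by
        intro w
        have h := congrArg (fun T : H →L[ℂ] H => T w) hAinv
        simpa only [ContinuousLinearMap.mul_apply, ContinuousLinearMap.one_apply] using h
      rw [hAAinv, add_comm]
      exact hS2p' x
    rw [left, right]
  -- (R*S)² = Ainv * S²
  have hRSRS : (R * S) * (R * S) = Ainv * S ^ 2 := by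
    calc (R * S) * (R * S) = R * (S * (R * S)) := by rw [mul_assoc]
      _ = R * ((S * R) * S) := by rw [mul_assoc]
      _ = R * ((R * S) * S) := by rw [hSR]
      _ = R * (R * (S * S)) := by rw [mul_assoc]
      _ = (R * R) * (S * S) := by rw [mul_assoc]
      _ = R ^ 2 * S ^ 2 := by rw [pow_two, pow_two]
      _ = Ainv * S ^ 2 := by rw [hR2eq]
  -- 0 ≤ R * S, by writing S as a continuous function of R
  have hfc : Continuous (fun x : ℝ => Real.sqrt (2 / (x ^ 2 + 1))) := by
    apply Real.continuous_sqrt.comp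
    exact continuous_const.div ((continuous_pow 2).add continuous_const) (fun x => by positivity)
  have hprodS : cfc (fun x : ℝ => Real.sqrt (2 / (x ^ 2 + 1))) R *
      cfc (fun x : ℝ => Real.sqrt (2 / (x ^ 2 + 1))) R = S ^ 2 := by
    have h2 : cfc (fun x : ℝ => Real.sqrt (2 / (x ^ 2 + 1))) R *
        cfc (fun x : ℝ => Real.sqrt (2 / (x ^ 2 + 1))) R
        = cfc (fun x : ℝ => 2 / (x ^ 2 + 1)) R := by
      calc cfc (fun x : ℝ => Real.sqrt (2 / (x ^ 2 + 1))) R *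
            cfc (fun x : ℝ => Real.sqrt (2 / (x ^ 2 + 1))) R
          = cfc (fun x : ℝ => Real.sqrt (2 / (x ^ 2 + 1)) * Real.sqrt (2 / (x ^ 2 + 1))) R :=
            (cfc_mul (fun x : ℝ => Real.sqrt (2 / (x ^ 2 + 1)))
              (fun x : ℝ => Real.sqrt (2 / (x ^ 2 + 1))) R
              hfc.continuousOn hfc.continuousOn).symm
        _ = cfc (fun x : ℝ => 2 / (x ^ 2 + 1)) R :=
            cfc_congr (fun x _ => Real.mul_self_sqrt (by positivity))
    have hA1 : cfc (fun x : ℝ => x ^ 2 + 1) R = Ainv + 1 := by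
      rw [cfc_add (a := R) (fun x : ℝ => x ^ 2) (fun _ => (1 : ℝ)), cfc_pow_id R 2,
        cfc_const (1 : ℝ) R, map_one, hR2eq]
    have h2smul : algebraMap ℝ (H →L[ℂ] H) 2 = (2 : ℂ) • 1 := by
      rw [Algebra.algebraMap_eq_smul_one]
      rw [show ((2 : ℂ)) = ((2 : ℝ) : ℂ) by norm_num, Complex.coe_smul]
    have hgc : Continuous (fun x : ℝ => 2 / (x ^ 2 + 1)) :=
      continuous_const.div ((continuous_pow 2).add continuous_const) (fun x => by positivity)
    have hpc : Continuous (fun x : ℝ => x ^ 2 + 1) :=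
      (continuous_pow 2).add continuous_const
    have h3 : cfc (fun x : ℝ => 2 / (x ^ 2 + 1)) R * (Ainv + 1) = (2 : ℂ) • 1 := by
      have hsplit : cfc (fun x : ℝ => (2 / (x ^ 2 + 1)) * (x ^ 2 + 1)) R
          = cfc (fun x : ℝ => 2 / (x ^ 2 + 1)) R * cfc (fun x : ℝ => x ^ 2 + 1) R :=
        cfc_mul (fun x : ℝ => 2 / (x ^ 2 + 1)) (fun x : ℝ => x ^ 2 + 1) R
          hgc.continuousOn hpc.continuousOn
      have hcongr : cfc (fun x : ℝ => (2 / (x ^ 2 + 1)) * (x ^ 2 + 1)) R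
          = cfc (fun _ : ℝ => (2 : ℝ)) R := by
        apply cfc_congr
        intro x _
        have hx : (x : ℝ) ^ 2 + 1 ≠ 0 := by positivity
        field_simp
      calc cfc (fun x : ℝ => 2 / (x ^ 2 + 1)) R * (Ainv + 1)
          = cfc (fun x : ℝ => 2 / (x ^ 2 + 1)) R * cfc (fun x : ℝ => x ^ 2 + 1) R := by
            rw [hA1]
        _ = cfc (fun _ : ℝ => (2 : ℝ)) R := by rw [← hsplit, hcongr]
        _ = (2 : ℂ) • 1 := by rw [cfc_const (2 : ℝ) R, h2smul]
    have hrinv : (Ainv + 1) * ((1/2 : ℂ) • S ^ 2) = 1 := by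
      rw [mul_smul_comm, hS2', smul_smul]
      norm_num
    have uniq : ∀ X : H →L[ℂ] H, X * (Ainv + 1) = (2 : ℂ) • 1 → X = S ^ 2 := by
      intro X hX
      calc X = X * ((Ainv + 1) * ((1/2 : ℂ) • S ^ 2)) := by rw [hrinv, mul_one]
        _ = (X * (Ainv + 1)) * ((1/2 : ℂ) • S ^ 2) := by rw [mul_assoc]
        _ = ((2 : ℂ) • 1) * ((1/2 : ℂ) • S ^ 2) := by rw [hX]
        _ = S ^ 2 := by rw [smul_mul_assoc, one_mul, smul_smul]; norm_num
    exact uniq _ (by rw [h2, h3])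
  have hfR_nonneg : (0 : H →L[ℂ] H) ≤ cfc (fun x : ℝ => Real.sqrt (2 / (x ^ 2 + 1))) R :=
    cfc_nonneg (fun x _ => Real.sqrt_nonneg _)
  have hSeq : S = cfc (fun x : ℝ => Real.sqrt (2 / (x ^ 2 + 1))) R := by
    calc S = CFC.sqrt (S * S) := (CFC.sqrt_mul_self S hS_pos).symm
      _ = CFC.sqrt (cfc (fun x : ℝ => Real.sqrt (2 / (x ^ 2 + 1))) R *
            cfc (fun x : ℝ => Real.sqrt (2 / (x ^ 2 + 1))) R) := by
          rw [← pow_two S, ← hprodS]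
      _ = cfc (fun x : ℝ => Real.sqrt (2 / (x ^ 2 + 1))) R :=
          CFC.sqrt_mul_self _ hfR_nonneg
  have hRS_nonneg : (0 : H →L[ℂ] H) ≤ R * S := by
    have hmul : R * cfc (fun x : ℝ => Real.sqrt (2 / (x ^ 2 + 1))) R
        = cfc (fun x : ℝ => x * Real.sqrt (2 / (x ^ 2 + 1))) R := by
      rw [cfc_mul (fun x : ℝ => x) (fun x : ℝ => Real.sqrt (2 / (x ^ 2 + 1))) R
        continuous_id.continuousOn hfc.continuousOn, cfc_id' ℝ R]
    rw [hSeq, hmul]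
    exact cfc_nonneg (fun x hx =>
      mul_nonneg (spectrum_nonneg_of_nonneg hR_pos hx) (Real.sqrt_nonneg _))
  -- main identity: Sc = R * S
  have hmain : Sc = R * S := by
    have h1 : Sc * Sc = (R * S) * (R * S) := by
      rw [hRSRS]
      ext x
      simp only [ContinuousLinearMap.mul_apply, pow_two]
      exact hScSc x
    calc Sc = CFC.sqrt (Sc * Sc) := (CFC.sqrt_mul_self Sc hSc_pos).symm
      _ = CFC.sqrt ((R * S) * (R * S)) := by rw [h1]
      _ = R * S := CFC.sqrt_mul_self _ hRS_nonneg
  have key : ∀ x : H, J (S (J x)) = R (S x) := by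
    intro x
    have h := congrArg (fun T : H →L[ℂ] H => T x) hmain
    simpa only [ContinuousLinearMap.mul_apply, hSc_apply] using h
  -- conclusion
  ext ξ
  simp only [Set.mem_setOf_eq, Set.mem_image]
  constructor
  · intro hξ
    have hJξ : J ξ = R ξ := by
      have h := congrArg J hξ
      rw [hJinv] at h
      exact h.symm
    refine ⟨(1/2 : ℂ) • S (Ainv ξ + ξ), ?_, ?_⟩
    · -- J η = η
      have hconjhalf : (starRingEnd ℂ) (1/2 : ℂ) = (1/2 : ℂ) := by
        rw [map_div₀, map_one, map_ofNat]
      have keyJ : ∀ w : H, J (S w) = R (S (J w)) := by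
        intro w
        have h := key (J w)
        rwa [hJinv] at h
      rw [hJsmul, hconjhalf, keyJ]
      have e2 : J (Ainv ξ + ξ) = A (R ξ) + R ξ := by
        rw [hJadd, hJAinv, hJξ]
      rw [e2]
      congr 1
      -- operator identity R*S*(A*R + R) = S*Ainv + S applied at ξ
      have c1 : R * S * (A * R) = S := by
        calc R * S * (A * R) = (R * (S * A)) * R := by rw [← mul_assoc, mul_assoc R S A]
          _ = (R * (A * S)) * R := by rw [hSA]
          _ = ((R * A) * S) * R := by rw [← mul_assoc]
          _ = ((A * R) * S) * R := by rw [hAR]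
          _ = A * (R * (S * R)) := by rw [mul_assoc, mul_assoc]
          _ = A * (R * (R * S)) := by rw [hSR]
          _ = A * ((R * R) * S) := by rw [← mul_assoc R R S]
          _ = (A * R ^ 2) * S := by rw [pow_two, ← mul_assoc]
          _ = S := by rw [hR2', one_mul]
      have c2 : R * S * R = Ainv * S := by
        calc R * S * R = R * (S * R) := by rw [mul_assoc]
          _ = R * (R * S) := by rw [hSR]
          _ = (R * R) * S := by rw [← mul_assoc]
          _ = R ^ 2 * S := by rw [pow_two]
          _ = Ainv * S := by rw [hR2eq]
      have hop : R * S * (A * R + R) = S * Ainv + S := by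
        calc R * S * (A * R + R) = R * S * (A * R) + R * S * R := by rw [mul_add]
          _ = S + Ainv * S := by rw [c1, c2]
          _ = S * Ainv + S := by rw [← hSAinv, add_comm]
      have h := congrArg (fun T : H →L[ℂ] H => T ξ) hop
      simp only [ContinuousLinearMap.mul_apply, ContinuousLinearMap.add_apply] at h
      rw [map_add S (Ainv ξ) ξ]
      exact h
    · -- S η = ξ
      show S ((1/2 : ℂ) • S (Ainv ξ + ξ)) = ξ
      rw [map_smul, hS2p ξ, smul_smul]
      norm_num
  · rintro ⟨η, hη, rfl⟩
    have h := key η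
    rw [hη] at h
    have h2 := congrArg J h
    rw [hJinv] at h2
    exact h2.symm
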